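/- arXiv:2004.12886 — 4 statements merged into one kernel-verified Lean document; each statement's English description precedes it below -/
import Mathlib

section
/- Let A be an n×n real matrix all of whose (complex) eigenvalues have negative real part, and let Q be an n×n real symmetric positive definite matrix. Then there exists a real symmetric positive definite matrix P satisfying the Lyapunov equation Aᵀ P + P A = -Q. -/
open Matrix Filter
open scoped NNReal ENNReal

attribute [local instance] Matrix.linftyOpNormedRing Matrix.linftyOpNormedAlgebra
attribute [local instance] Matrix.linftyOpNormedAddCommGroup Matrix.linftyOpNormedSpace

private lemma lyap_nnnorm_map {n : ℕ} (M : Matrix (Fin n) (Fin n) ℝ) :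
    ‖M.map (algebraMap ℝ ℂ)‖₊ = ‖M‖₊ := by
  simp [Matrix.linfty_opNNNorm_def, Matrix.map_apply]

private lemma lyap_radius {n : ℕ} [NeZero n] (A' B' C' : Matrix (Fin n) (Fin n) ℂ)
    (hunit : ∀ l : ℂ, 0 ≤ l.re → IsUnit (l • (1 : Matrix (Fin n) (Fin n) ℂ) - A'))
    (hC1 : (1 - A') * C' = 1) (hC2 : C' * (1 - A') = 1)
    (hB : B' = (1 + A') * C') :
    spectralRadius ℂ B' < 1 := by
  have key : ∀ μ ∈ spectrum ℂ B', ‖μ‖₊ < 1 := by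
    intro μ hμ
    by_contra hge
    rw [not_lt] at hge
    apply (spectrum.notMem_iff.mpr ?_) hμ
    rw [Algebra.algebraMap_eq_smul_one]
    have hCunit : IsUnit C' := ⟨⟨C', 1 - A', hC2, hC1⟩, rfl⟩
    have hX : IsUnit ((μ - 1) • (1 : Matrix (Fin n) (Fin n) ℂ) - (μ + 1) • A') := by
      by_cases hm : μ = -1
      · subst hm
        have : ((-1 - 1 : ℂ)) • (1 : Matrix (Fin n) (Fin n) ℂ) - ((-1 + 1 : ℂ)) • A'
            = algebraMap ℂ _ (-2 : ℂ) := by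
          rw [Algebra.algebraMap_eq_smul_one]; module
        rw [this]
        exact (isUnit_iff_ne_zero.mpr (by norm_num)).map (algebraMap ℂ (Matrix (Fin n) (Fin n) ℂ))
      · have hne : μ + 1 ≠ 0 := fun h => hm (by linear_combination h)
        set l : ℂ := (μ - 1) / (μ + 1) with hl
        have hre : 0 ≤ l.re := by
          rw [hl, Complex.div_re]
          have h1 : 1 ≤ Complex.normSq μ := by
            have h' : (1:ℝ) ≤ ‖μ‖ := by exact_mod_cast hge
            rw [Complex.normSq_eq_norm_sq]
            nlinarith
          have h2 : 0 < Complex.normSq (μ + 1) := Complex.normSq_pos.mpr hne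
          have hnum : (μ - 1).re * (μ + 1).re + (μ - 1).im * (μ + 1).im
              = Complex.normSq μ - 1 := by
            simp [Complex.normSq_apply, Complex.add_re, Complex.sub_re]; ring
          rw [← add_div, hnum]
          apply div_nonneg (by linarith) h2.le
        have hU := hunit l hre
        have hXe : (μ - 1) • (1 : Matrix (Fin n) (Fin n) ℂ) - (μ + 1) • A'
            = (μ + 1) • (l • (1 : Matrix (Fin n) (Fin n) ℂ) - A') := by
          rw [smul_sub, smul_smul, hl, mul_div_cancel₀ _ hne]
        rw [hXe]
        have : (μ + 1) • (l • (1 : Matrix (Fin n) (Fin n) ℂ) - A')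
            = (algebraMap ℂ (Matrix (Fin n) (Fin n) ℂ) (μ + 1))
              * (l • (1 : Matrix (Fin n) (Fin n) ℂ) - A') := by
          rw [Algebra.algebraMap_eq_smul_one, smul_mul_assoc, one_mul]
        rw [this]
        exact ((isUnit_iff_ne_zero.mpr hne).map (algebraMap ℂ (Matrix (Fin n) (Fin n) ℂ))).mul hU
    have hfact : μ • (1 : Matrix (Fin n) (Fin n) ℂ) - B'
        = ((μ - 1) • (1 : Matrix (Fin n) (Fin n) ℂ) - (μ + 1) • A') * C' := by
      have : ((μ - 1) • (1 : Matrix (Fin n) (Fin n) ℂ) - (μ + 1) • A')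
          = μ • (1 - A') - (1 + A') := by module
      rw [this, sub_mul, smul_mul_assoc, hC1, hB]
    rw [hfact]
    exact hX.mul hCunit
  haveI : Nontrivial (Matrix (Fin n) (Fin n) ℂ) := by
    haveI : Nonempty (Fin n) := Fin.pos_iff_nonempty.mp (Nat.pos_of_ne_zero (NeZero.ne n))
    infer_instance
  exact spectrum.spectralRadius_lt_of_forall_lt B' key

private lemma lyap_decay {n : ℕ} (B' : Matrix (Fin n) (Fin n) ℂ)
    (hρ : spectralRadius ℂ B' < 1) :
    ∃ r : ℝ≥0, r < 1 ∧ ∀ᶠ k : ℕ in atTop, ‖B' ^ k‖₊ ≤ r ^ k := by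
  haveI : CompleteSpace (Matrix (Fin n) (Fin n) ℂ) := FiniteDimensional.complete ℂ _
  obtain ⟨r, hr1, hr2⟩ := ENNReal.lt_iff_exists_nnreal_btwn.mp hρ
  refine ⟨r, by exact_mod_cast hr2, ?_⟩
  have T := spectrum.pow_nnnorm_pow_one_div_tendsto_nhds_spectralRadius B'
  have hev : ∀ᶠ k : ℕ in atTop, (‖B' ^ k‖₊ : ℝ≥0∞) ^ (1 / (k : ℝ)) < (r : ℝ≥0∞) :=
    T.eventually_lt_const hr1
  filter_upwards [hev, eventually_ge_atTop 1] with k hk hk1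
  have hk0 : (k : ℝ) ≠ 0 := by positivity
  have := ENNReal.rpow_le_rpow hk.le (by positivity : (0:ℝ) ≤ (k:ℝ))
  rw [← ENNReal.rpow_mul, one_div, inv_mul_cancel₀ hk0, ENNReal.rpow_one] at this
  have h2 : ((r : ℝ≥0∞) ^ (k:ℝ)) = ((r ^ k : ℝ≥0) : ℝ≥0∞) := by
    rw [ENNReal.rpow_natCast]; exact_mod_cast rfl
  rw [h2] at this
  exact_mod_cast this

/-- Let `A` be an `n × n` real matrix all of whose complex eigenvalues have
negative real part, and let `Q` be a real symmetric positive definite matrix.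
Then there exists a real symmetric positive definite matrix `P` satisfying the
Lyapunov equation `Aᵀ P + P A = -Q`. -/
theorem lyapunov_equation_exists_solution
    {n : ℕ} (A Q : Matrix (Fin n) (Fin n) ℝ)
    (hA : ∀ μ ∈ spectrum ℂ (A.map (algebraMap ℝ ℂ)), μ.re < 0)
    (hQsymm : Q.IsSymm)
    (hQpos : ∀ x : Fin n → ℝ, x ≠ 0 → 0 < x ⬝ᵥ Q.mulVec x) :
    ∃ P : Matrix (Fin n) (Fin n) ℝ, P.IsSymm ∧
      (∀ x : Fin n → ℝ, x ≠ 0 → 0 < x ⬝ᵥ P.mulVec x) ∧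
      Aᵀ * P + P * A = -Q := by
  rcases Nat.eq_zero_or_pos n with hn | hn
  · subst hn
    refine ⟨0, ?_, ?_, ?_⟩
    · ext i j; exact i.elim0
    · intro x hx; exact absurd (funext fun i => i.elim0) hx
    · ext i j; exact i.elim0
  haveI : NeZero n := ⟨hn.ne'⟩
  haveI : CompleteSpace (Matrix (Fin n) (Fin n) ℝ) := FiniteDimensional.complete ℝ _
  set f : Matrix (Fin n) (Fin n) ℝ →+* Matrix (Fin n) (Fin n) ℂ :=
    (algebraMap ℝ ℂ).mapMatrix with hf
  have hfA : f A = A.map (algebraMap ℝ ℂ) := rfl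
  -- units for Re l ≥ 0
  have hunit : ∀ l : ℂ, 0 ≤ l.re → IsUnit (l • (1 : Matrix (Fin n) (Fin n) ℂ) - f A) := by
    intro l hl
    have h : l ∉ spectrum ℂ (A.map (algebraMap ℝ ℂ)) := fun h => absurd (hA _ h) (not_lt.2 hl)
    rw [spectrum.notMem_iff] at h
    rw [Algebra.algebraMap_eq_smul_one] at h
    exact hfA ▸ h
  -- (1 - A) is invertible over ℝ
  have hu1C : IsUnit ((1 : Matrix (Fin n) (Fin n) ℂ) - f A) := by
    have := hunit 1 (by norm_num)
    rwa [one_smul] at this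
  have hu1R : IsUnit ((1 : Matrix (Fin n) (Fin n) ℝ) - A) := by
    have hu1C' : IsUnit ((1 : Matrix (Fin n) (Fin n) ℂ) - A.map (algebraMap ℝ ℂ)) := hu1C
    rw [Matrix.isUnit_iff_isUnit_det] at hu1C' ⊢
    have hmap : ((1 : Matrix (Fin n) (Fin n) ℝ) - A).map (algebraMap ℝ ℂ)
        = 1 - A.map (algebraMap ℝ ℂ) := by
      ext i j
      simp [Matrix.map_apply, Matrix.one_apply, Matrix.sub_apply]
      split <;> simp
    rw [← hmap, ← RingHom.mapMatrix_apply, ← RingHom.map_det] at hu1C'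
    rw [isUnit_iff_ne_zero] at hu1C' ⊢
    intro h0
    exact hu1C' (by simp [h0])
  have hdet : IsUnit ((1 : Matrix (Fin n) (Fin n) ℝ) - A).det :=
    (Matrix.isUnit_iff_isUnit_det _).mp hu1R
  set C : Matrix (Fin n) (Fin n) ℝ := (1 - A)⁻¹ with hCdef
  have hC1 : (1 - A) * C = 1 := Matrix.mul_nonsing_inv _ hdet
  have hC2 : C * (1 - A) = 1 := Matrix.nonsing_inv_mul _ hdet
  set B : Matrix (Fin n) (Fin n) ℝ := (1 + A) * C with hBdef
  -- complex versions
  have hC1' : (1 - f A) * f C = 1 := by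
    have := congrArg f hC1
    rwa [_root_.map_mul, _root_.map_sub, _root_.map_one] at this
  have hC2' : f C * (1 - f A) = 1 := by
    have := congrArg f hC2
    rwa [_root_.map_mul, _root_.map_sub, _root_.map_one] at this
  have hB' : f B = (1 + f A) * f C := by
    rw [hBdef, _root_.map_mul, _root_.map_add, _root_.map_one]
  have hρ : spectralRadius ℂ (f B) < 1 := lyap_radius (f A) (f B) (f C) hunit hC1' hC2' hB'
  obtain ⟨r, hr1, hev⟩ := lyap_decay (f B) hρ
  -- transfer decay to the real matrix B
  have hevR : ∀ᶠ k : ℕ in atTop, ‖B ^ k‖ ≤ (r : ℝ) ^ k := by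
    filter_upwards [hev] with k hk
    have : f (B ^ k) = (B ^ k).map (algebraMap ℝ ℂ) := rfl
    rw [← map_pow, this] at hk
    rw [lyap_nnnorm_map] at hk
    exact_mod_cast hk
  -- the series
  set Q' : Matrix (Fin n) (Fin n) ℝ := Cᵀ * (Q + Q) * C with hQ'def
  set g : ℕ → Matrix (Fin n) (Fin n) ℝ := fun k => (B ^ k)ᵀ * Q' * B ^ k with hgdef
  -- summability
  have hsum : Summable g := by
    letI : SeminormedAddCommGroup (Matrix (Fin n) (Fin n) ℝ →L[ℝ] Matrix (Fin n) (Fin n) ℝ) :=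
      ContinuousLinearMap.toSeminormedAddCommGroup (σ₁₂ := RingHom.id ℝ)
    set τ : Matrix (Fin n) (Fin n) ℝ →L[ℝ] Matrix (Fin n) (Fin n) ℝ :=
      LinearMap.toContinuousLinearMap
        ((Matrix.transposeLinearEquiv (Fin n) (Fin n) ℝ ℝ).toLinearMap) with hτ
    have hτapp : ∀ M : Matrix (Fin n) (Fin n) ℝ, τ M = Mᵀ := fun M => rfl
    apply Summable.of_norm_bounded_eventually_nat
      (g := fun k => (‖τ‖ * ‖Q'‖) * (((r : ℝ) ^ 2) ^ k))
    · apply Summable.mul_left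
      apply summable_geometric_of_lt_one (by positivity)
      have : (r : ℝ) < 1 := by exact_mod_cast hr1
      nlinarith [r.coe_nonneg]
    · filter_upwards [hevR] with k hk
      have hb1 : ‖(B ^ k)ᵀ‖ ≤ ‖τ‖ * ‖B ^ k‖ := by
        rw [← hτapp]; exact τ.le_opNorm _
      have hrk : (0:ℝ) ≤ (r : ℝ) ^ k := by positivity
      have hbk : (0:ℝ) ≤ ‖B ^ k‖ := norm_nonneg _
      calc ‖g k‖ ≤ ‖(B ^ k)ᵀ * Q'‖ * ‖B ^ k‖ := norm_mul_le _ _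
        _ ≤ ‖(B ^ k)ᵀ‖ * ‖Q'‖ * ‖B ^ k‖ :=
            mul_le_mul_of_nonneg_right (norm_mul_le _ _) hbk
        _ ≤ (‖τ‖ * ‖B ^ k‖) * ‖Q'‖ * ‖B ^ k‖ := by
            have := mul_le_mul_of_nonneg_right hb1 (mul_nonneg (norm_nonneg Q') hbk)
            calc ‖(B ^ k)ᵀ‖ * ‖Q'‖ * ‖B ^ k‖ = ‖(B ^ k)ᵀ‖ * (‖Q'‖ * ‖B ^ k‖) := by ring
              _ ≤ (‖τ‖ * ‖B ^ k‖) * (‖Q'‖ * ‖B ^ k‖) := this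
              _ = (‖τ‖ * ‖B ^ k‖) * ‖Q'‖ * ‖B ^ k‖ := by ring
        _ ≤ (‖τ‖ * ‖Q'‖) * (((r : ℝ) ^ 2) ^ k) := by
            have hτn : (0:ℝ) ≤ ‖τ‖ := norm_nonneg _
            have hQn : (0:ℝ) ≤ ‖Q'‖ := norm_nonneg _
            have h2 : (((r : ℝ) ^ 2) ^ k) = ((r:ℝ)^k) * ((r:ℝ)^k) := by
              rw [← pow_mul, two_mul, pow_add]
            have hbb : ‖B ^ k‖ * ‖B ^ k‖ ≤ (r:ℝ)^k * (r:ℝ)^k :=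
              mul_le_mul hk hk hbk hrk
            calc ‖τ‖ * ‖B ^ k‖ * ‖Q'‖ * ‖B ^ k‖
                = (‖τ‖ * ‖Q'‖) * (‖B ^ k‖ * ‖B ^ k‖) := by ring
              _ ≤ (‖τ‖ * ‖Q'‖) * ((r:ℝ)^k * (r:ℝ)^k) :=
                  mul_le_mul_of_nonneg_left hbb (by positivity)
              _ = (‖τ‖ * ‖Q'‖) * (((r : ℝ) ^ 2) ^ k) := by rw [h2]
  set P : Matrix (Fin n) (Fin n) ℝ := ∑' k, g k with hPdef
  have hg0 : g 0 = Q' := by simp [hgdef]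
  -- Stein equation : Bᵀ * P * B - P = -Q'
  have hstein : Bᵀ * P * B - P = -Q' := by
    set L : Matrix (Fin n) (Fin n) ℝ →L[ℝ] Matrix (Fin n) (Fin n) ℝ :=
      LinearMap.toContinuousLinearMap
        (((LinearMap.mulLeft ℝ Bᵀ).comp (LinearMap.mulRight ℝ B))) with hL
    have hLapp : ∀ M, L M = Bᵀ * M * B := by
      intro M
      show (LinearMap.mulLeft ℝ Bᵀ) ((LinearMap.mulRight ℝ B) M) = _
      simp [LinearMap.mulLeft_apply, LinearMap.mulRight_apply, mul_assoc]
    have h1 : Bᵀ * P * B = ∑' k, g (k + 1) := by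
      have hmt := L.map_tsum hsum
      calc Bᵀ * P * B = L P := (hLapp P).symm
        _ = ∑' k, L (g k) := by rw [hPdef]; exact hmt
        _ = ∑' k, g (k + 1) := by
            congr 1
            funext k
            rw [hLapp, hgdef]
            simp only [pow_succ, Matrix.transpose_mul]
            noncomm_ring
    have h2 : P = g 0 + ∑' k, g (k + 1) := hsum.tsum_eq_zero_add
    rw [h1, h2, hg0]
    abel
  -- symmetry
  have hQ'symm : Q'ᵀ = Q' := by
    rw [hQ'def]
    rw [Matrix.transpose_mul, Matrix.transpose_mul, Matrix.transpose_add,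
      Matrix.transpose_transpose, hQsymm.eq, mul_assoc]
  have hgsymm : ∀ k, (g k)ᵀ = g k := by
    intro k
    rw [hgdef]
    simp only [Matrix.transpose_mul, Matrix.transpose_transpose, hQ'symm, mul_assoc]
  have hPsymm : P.IsSymm := by
    set τ : Matrix (Fin n) (Fin n) ℝ →L[ℝ] Matrix (Fin n) (Fin n) ℝ :=
      LinearMap.toContinuousLinearMap
        ((Matrix.transposeLinearEquiv (Fin n) (Fin n) ℝ ℝ).toLinearMap) with hτ
    have hτapp : ∀ M : Matrix (Fin n) (Fin n) ℝ, τ M = Mᵀ := fun M => rfl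
    show Pᵀ = P
    rw [hPdef, ← hτapp, τ.map_tsum hsum]
    congr 1
    funext k
    rw [hτapp, hgsymm]
  -- positivity of Q'
  have hCinj : ∀ y : Fin n → ℝ, C.mulVec y = 0 → y = 0 := by
    intro y hy
    have : ((1 - A) * C).mulVec y = (1 - A).mulVec (C.mulVec y) := (Matrix.mulVec_mulVec _ _ _).symm
    rw [hC1, hy, Matrix.mulVec_zero, Matrix.one_mulVec] at this
    exact this
  have hQ'pos : ∀ y : Fin n → ℝ, y ≠ 0 → 0 < y ⬝ᵥ Q'.mulVec y := by
    intro y hy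
    have hCy : C.mulVec y ≠ 0 := fun h => hy (hCinj y h)
    have key : y ⬝ᵥ Q'.mulVec y
        = (C.mulVec y) ⬝ᵥ Q.mulVec (C.mulVec y) + (C.mulVec y) ⬝ᵥ Q.mulVec (C.mulVec y) := by
      rw [hQ'def]
      rw [← Matrix.mulVec_mulVec, ← Matrix.mulVec_mulVec]
      rw [Matrix.dotProduct_mulVec y Cᵀ, Matrix.vecMul_transpose]
      rw [Matrix.add_mulVec, dotProduct_add]
    rw [key]
    have := hQpos _ hCy
    linarith
  -- positivity of P
  have hPpos : ∀ x : Fin n → ℝ, x ≠ 0 → 0 < x ⬝ᵥ P.mulVec x := by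
    intro x hx
    set φ : Matrix (Fin n) (Fin n) ℝ →ₗ[ℝ] ℝ :=
      { toFun := fun M => x ⬝ᵥ M.mulVec x
        map_add' := by
          intro M N
          simp only [Matrix.add_mulVec, dotProduct_add]
        map_smul' := by
          intro c M
          simp only [Matrix.smul_mulVec, dotProduct_smul, RingHom.id_apply,
            smul_eq_mul] } with hφ
    set φc : Matrix (Fin n) (Fin n) ℝ →L[ℝ] ℝ := LinearMap.toContinuousLinearMap φ with hφc
    have hφapp : ∀ M, φc M = x ⬝ᵥ M.mulVec x := fun M => rfl
    have hval : ∀ k, φc (g k)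
        = ((B ^ k).mulVec x) ⬝ᵥ Q'.mulVec ((B ^ k).mulVec x) := by
      intro k
      rw [hφapp, hgdef]
      rw [← Matrix.mulVec_mulVec, ← Matrix.mulVec_mulVec]
      rw [Matrix.dotProduct_mulVec x (B ^ k)ᵀ, Matrix.vecMul_transpose]
    have hsum' : Summable (fun k => φc (g k)) := hsum.map φc φc.continuous
    have heq : x ⬝ᵥ P.mulVec x = ∑' k, φc (g k) := by
      rw [← hφapp, hPdef, φc.map_tsum hsum]
    rw [heq]
    apply Summable.tsum_pos hsum' ?_ 0
    · rw [hval 0]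
      simp only [pow_zero, Matrix.one_mulVec]
      exact hQ'pos x hx
    · intro k
      rw [hval k]
      by_cases h : (B ^ k).mulVec x = 0
      · rw [h]; simp
      · exact (hQ'pos _ h).le
  -- from Stein to Lyapunov
  have htC1 : Cᵀ * (1 - Aᵀ) = 1 := by
    have := congrArg Matrix.transpose hC1
    rwa [Matrix.transpose_mul, Matrix.transpose_sub, Matrix.transpose_one] at this
  have htC2 : (1 - Aᵀ) * Cᵀ = 1 := by
    have := congrArg Matrix.transpose hC2
    rwa [Matrix.transpose_mul, Matrix.transpose_sub, Matrix.transpose_one] at this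
  have hBt : Bᵀ = Cᵀ * (1 + Aᵀ) := by
    rw [hBdef, Matrix.transpose_mul, Matrix.transpose_add, Matrix.transpose_one]
  have hkey : Cᵀ * ((Aᵀ * P + P * A) + (Aᵀ * P + P * A)) * C = -(Cᵀ * (Q + Q) * C) := by
    have hPfac : P = (Cᵀ * (1 - Aᵀ)) * P * ((1 - A) * C) := by rw [htC1, hC1, one_mul, mul_one]
    have expand : Bᵀ * P * B - P
        = Cᵀ * ((Aᵀ * P + P * A) + (Aᵀ * P + P * A)) * C := by
      calc Bᵀ * P * B - P
          = (Cᵀ * (1 + Aᵀ)) * P * ((1 + A) * C) - (Cᵀ * (1 - Aᵀ)) * P * ((1 - A) * C) := by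
            rw [← hBt, ← hPfac, hBdef]
        _ = Cᵀ * ((Aᵀ * P + P * A) + (Aᵀ * P + P * A)) * C := by noncomm_ring
    rw [← expand, hstein, hQ'def]
  have hcancel : (Aᵀ * P + P * A) + (Aᵀ * P + P * A) = -(Q + Q) := by
    have h1 := congrArg (fun M => (1 - Aᵀ) * M * (1 - A)) hkey
    have e : ∀ M : Matrix (Fin n) (Fin n) ℝ, (1 - Aᵀ) * (Cᵀ * M * C) * (1 - A) = M := by
      intro M
      calc (1 - Aᵀ) * (Cᵀ * M * C) * (1 - A)
          = ((1 - Aᵀ) * Cᵀ) * M * (C * (1 - A)) := by noncomm_ring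
        _ = M := by rw [htC2, hC2, one_mul, mul_one]
    rw [e] at h1
    have e2 : (1 - Aᵀ) * -(Cᵀ * (Q + Q) * C) * (1 - A)
        = -((1 - Aᵀ) * (Cᵀ * (Q + Q) * C) * (1 - A)) := by noncomm_ring
    rw [e2, e] at h1
    exact h1
  have hlyap : Aᵀ * P + P * A = -Q := by
    have h2 : (2:ℝ) • (Aᵀ * P + P * A) = (2:ℝ) • (-Q) := by
      rw [two_smul, two_smul, hcancel]
      abel
    have := smul_right_injective (Matrix (Fin n) (Fin n) ℝ) (two_ne_zero (α := ℝ)) h2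
    exact this
  exact ⟨P, hPsymm, hPpos, hlyap⟩
end

section
/- Let A be an n×n real matrix all of whose (complex) eigenvalues have negative real part, and let Q be an n×n real symmetric positive definite matrix. Then the solution P of the Lyapunov equation Aᵀ P + P A = -Q is unique: if P₁ and P₂ are real symmetric matrices with Aᵀ P₁ + P₁ A = -Q and Aᵀ P₂ + P₂ A = -Q, then P₁ = P₂. -/
open Matrix Polynomial

lemma my_eval_charpoly {m : Type*} [Fintype m] [DecidableEq m]
    (M : Matrix m m ℂ) (μ : ℂ) :
    M.charpoly.eval μ = (Matrix.scalar m μ - M).det := by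
  rw [Matrix.charpoly, _root_.eval_det, matPolyEquiv_charmatrix]
  simp

lemma my_mem_spectrum_iff_root {m : Type*} [Fintype m] [DecidableEq m]
    (M : Matrix m m ℂ) (μ : ℂ) :
    μ ∈ spectrum ℂ M ↔ M.charpoly.IsRoot μ := by
  rw [spectrum.mem_iff, Matrix.isUnit_iff_isUnit_det, isUnit_iff_ne_zero, not_not,
    Polynomial.IsRoot, my_eval_charpoly]
  have h1 : (algebraMap ℂ (Matrix m m ℂ)) μ = Matrix.scalar m μ := by
    ext i j
    simp [Matrix.algebraMap_matrix_apply, Matrix.scalar_apply, Matrix.diagonal_apply]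
  rw [h1]

lemma my_aeval_commute {m : Type*} [Fintype m] [DecidableEq m]
    (B C D : Matrix m m ℂ) (h : B * D = D * C) (q : ℂ[X]) :
    (aeval B q) * D = D * (aeval C q) := by
  induction q using Polynomial.induction_on with
  | C a => simp [Algebra.smul_def, Matrix.smul_mul, Matrix.mul_smul,
      Algebra.commutes]
  | add p r hp hr => simp [map_add, add_mul, mul_add, hp, hr]
  | monomial k a hk =>
      have h2 : B ^ (k + 1) * D = D * C ^ (k + 1) := by
        have hbase : ∀ j : ℕ, B ^ j * D = D * C ^ j := by
          intro j
          induction j with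
          | zero => simp
          | succ j ih =>
            rw [pow_succ, pow_succ, mul_assoc, h, ← mul_assoc, ih, mul_assoc]
        exact hbase (k + 1)
      simp only [_root_.map_mul, _root_.map_pow, aeval_C, aeval_X]
      rw [mul_assoc, h2, ← mul_assoc, ← mul_assoc]
      congr 1
      exact Algebra.commutes a D

/-- Let `A` be an `n × n` real matrix all of whose complex eigenvalues have
negative real part, and let `Q` be a real symmetric positive definite matrix.
Then the symmetric solution of the Lyapunov equation `Aᵀ P + P A = -Q` is
unique. -/
theorem lyapunov_equation_unique_solution
    {n : ℕ} (A Q : Matrix (Fin n) (Fin n) ℝ)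
    (hA : ∀ μ ∈ spectrum ℂ (A.map (algebraMap ℝ ℂ)), μ.re < 0)
    (hQsymm : Q.IsSymm)
    (hQpos : ∀ x : Fin n → ℝ, x ≠ 0 → 0 < x ⬝ᵥ Q.mulVec x)
    (P₁ P₂ : Matrix (Fin n) (Fin n) ℝ) (hP₁symm : P₁.IsSymm) (hP₂symm : P₂.IsSymm)
    (hP₁ : Aᵀ * P₁ + P₁ * A = -Q) (hP₂ : Aᵀ * P₂ + P₂ * A = -Q) :
    P₁ = P₂ := by
  rcases Nat.eq_zero_or_pos n with hn | hn
  · subst hn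
    ext i
    exact i.elim0
  -- real difference satisfies the homogeneous equation
  set D : Matrix (Fin n) (Fin n) ℝ := P₁ - P₂ with hD
  have hDeq : Aᵀ * D + D * A = 0 := by
    have := congrArg₂ (· - ·) hP₁ hP₂
    simpa [hD, mul_sub, sub_mul, add_sub_add_comm] using this
  -- move to ℂ
  set f := algebraMap ℝ ℂ
  set B : Matrix (Fin n) (Fin n) ℂ := A.map f with hB
  set Dc : Matrix (Fin n) (Fin n) ℂ := D.map f with hDc
  have hDceq : Bᵀ * Dc + Dc * B = 0 := by
    have := congrArg (fun M : Matrix (Fin n) (Fin n) ℝ => M.map f) hDeq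
    simpa [Matrix.map_add, Matrix.map_mul, Matrix.transpose_map] using this
  have hkey : Bᵀ * Dc = Dc * (-B) := by
    rw [eq_neg_of_add_eq_zero_left hDceq]
    simp [Matrix.mul_neg]
  -- polynomial trick
  set q : ℂ[X] := (-B).charpoly with hq
  have hcomm := my_aeval_commute Bᵀ (-B) Dc hkey q
  rw [hq, Matrix.aeval_self_charpoly, mul_zero] at hcomm
  -- aeval Bᵀ q is a unit
  have hunit : IsUnit (aeval Bᵀ q) := by
    by_contra hnu
    have h0 : (0 : ℂ) ∈ spectrum ℂ (aeval Bᵀ q) := (spectrum.zero_mem_iff (R := ℂ)).mpr hnu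
    have hdeg : 0 < q.degree := by
      rw [hq, Matrix.charpoly_degree_eq_dim]
      simp only [Fintype.card_fin]
      exact_mod_cast hn
    rw [spectrum.map_polynomial_aeval_of_degree_pos Bᵀ q hdeg] at h0
    obtain ⟨μ, hμmem, hμ0⟩ := h0
    -- μ ∈ spectrum Bᵀ means μ ∈ spectrum B
    have hμB : μ ∈ spectrum ℂ B := by
      rw [my_mem_spectrum_iff_root] at hμmem ⊢
      have hch : charmatrix Bᵀ = (charmatrix B)ᵀ := by
        ext i j
        rw [Matrix.transpose_apply, charmatrix_apply, charmatrix_apply]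
        simp [Matrix.diagonal_apply, eq_comm]
      have hcp : Bᵀ.charpoly = B.charpoly := by
        unfold Matrix.charpoly
        rw [hch, Matrix.det_transpose]
      rwa [hcp] at hμmem
    have hre : μ.re < 0 := hA μ hμB
    -- q.eval μ = 0 means -μ ∈ spectrum B
    have hμnegB : -μ ∈ spectrum ℂ B := by
      have : μ ∈ spectrum ℂ (-B) := (my_mem_spectrum_iff_root (-B) μ).mpr hμ0
      rw [← spectrum.neg_eq] at this
      simpa using this
    have := hA (-μ) hμnegB
    simp only [Complex.neg_re] at this
    linarith
  -- conclude Dc = 0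
  have hDc0 : Dc = 0 := by
    calc Dc = 1 * Dc := (one_mul Dc).symm
      _ = (↑hunit.unit⁻¹ * aeval Bᵀ q) * Dc := by rw [IsUnit.val_inv_mul]
      _ = ↑hunit.unit⁻¹ * (aeval Bᵀ q * Dc) := mul_assoc _ _ _
      _ = ↑hunit.unit⁻¹ * 0 := by rw [show aeval Bᵀ q * Dc = 0 from hcomm]
      _ = 0 := mul_zero _
  have hD0 : D = 0 := by
    ext i j
    have := congrFun (congrFun hDc0 i) j
    simpa [hDc, f] using this
  have := sub_eq_zero.mp (hD ▸ hD0 : P₁ - P₂ = 0)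
  exact this
end

section
/- Let A be an n×n real matrix, and suppose there exist real symmetric positive definite matrices P and Q satisfying the Lyapunov equation Aᵀ P + P A = -Q. Then every (complex) eigenvalue of A has negative real part. -/
open Matrix

private lemma posdef_complexify {n : ℕ} (M : Matrix (Fin n) (Fin n) ℝ)
    (hsymm : M.IsSymm) (hpos : ∀ x : Fin n → ℝ, x ≠ 0 → 0 < x ⬝ᵥ M.mulVec x)
    (v : Fin n → ℂ) (hv : v ≠ 0) :
    ∃ r : ℝ, 0 < r ∧ star v ⬝ᵥ (M.map (algebraMap ℝ ℂ)) *ᵥ v = (r : ℂ) := by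
  classical
  set x : Fin n → ℝ := fun i => (v i).re with hx
  set y : Fin n → ℝ := fun i => (v i).im with hy
  have hnonneg : ∀ z : Fin n → ℝ, 0 ≤ z ⬝ᵥ M.mulVec z := by
    intro z
    by_cases hz : z = 0
    · simp [hz]
    · exact (hpos z hz).le
  have hkey : star v ⬝ᵥ (M.map (algebraMap ℝ ℂ)) *ᵥ v
      = ((x ⬝ᵥ M *ᵥ x + y ⬝ᵥ M *ᵥ y : ℝ) : ℂ)
        + ((x ⬝ᵥ M *ᵥ y - y ⬝ᵥ M *ᵥ x : ℝ) : ℂ) * Complex.I := by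
    simp only [dotProduct, mulVec, Pi.star_apply, Finset.mul_sum,
      Complex.ofReal_sum, Finset.sum_mul, Complex.ofReal_add, Complex.ofReal_sub,
      ← Finset.sum_add_distrib, ← Finset.sum_sub_distrib]
    refine Finset.sum_congr rfl fun i _ => Finset.sum_congr rfl fun j _ => ?_
    apply Complex.ext <;>
      simp [Matrix.map_apply, Complex.mul_re, Complex.mul_im, hx, hy] <;> ring
  have hsym' : y ⬝ᵥ M *ᵥ x = x ⬝ᵥ M *ᵥ y := by
    rw [Matrix.dotProduct_mulVec, ← Matrix.mulVec_transpose, hsymm.eq,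
      dotProduct_comm]
  refine ⟨x ⬝ᵥ M *ᵥ x + y ⬝ᵥ M *ᵥ y, ?_, by rw [hkey, hsym']; simp⟩
  have hxy : x ≠ 0 ∨ y ≠ 0 := by
    by_contra h
    push_neg at h
    apply hv
    funext i
    have h1 := congrFun h.1 i
    have h2 := congrFun h.2 i
    simp [hx, hy] at h1 h2
    exact Complex.ext h1 h2
  rcases hxy with h | h
  · have := hpos x h; have := hnonneg y; linarith
  · have := hpos y h; have := hnonneg x; linarith

/-- Let `A` be an `n × n` real matrix and suppose there exist real symmetric
positive definite matrices `P` and `Q` satisfying `Aᵀ P + P A = -Q`.  Then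
every complex eigenvalue of `A` has negative real part. -/
theorem lyapunov_implies_eigenvalues_neg_re
    {n : ℕ} (A P Q : Matrix (Fin n) (Fin n) ℝ)
    (hPsymm : P.IsSymm) (hPpos : ∀ x : Fin n → ℝ, x ≠ 0 → 0 < x ⬝ᵥ P.mulVec x)
    (hQsymm : Q.IsSymm) (hQpos : ∀ x : Fin n → ℝ, x ≠ 0 → 0 < x ⬝ᵥ Q.mulVec x)
    (hLyap : Aᵀ * P + P * A = -Q) :
    ∀ μ ∈ spectrum ℂ (A.map (algebraMap ℝ ℂ)), μ.re < 0 := by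
  intro μ hμ
  classical
  set Aℂ := A.map (algebraMap ℝ ℂ) with hAC
  set Pℂ := P.map (algebraMap ℝ ℂ) with hPC
  set Qℂ := Q.map (algebraMap ℝ ℂ) with hQC
  -- extract an eigenvector
  rw [spectrum.mem_iff, Matrix.isUnit_iff_isUnit_det] at hμ
  have hdet : ((algebraMap ℂ (Matrix (Fin n) (Fin n) ℂ)) μ - Aℂ).det = 0 := by
    by_contra h
    exact hμ (isUnit_iff_ne_zero.mpr h)
  obtain ⟨v, hv, hv0⟩ := (Matrix.exists_mulVec_eq_zero_iff).mpr hdet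
  have heig : Aℂ *ᵥ v = μ • v := by
    have h1 : (algebraMap ℂ (Matrix (Fin n) (Fin n) ℂ)) μ *ᵥ v - Aℂ *ᵥ v = 0 := by
      rw [← Matrix.sub_mulVec]; exact hv0
    have h2 : (algebraMap ℂ (Matrix (Fin n) (Fin n) ℂ)) μ *ᵥ v = μ • v := by
      funext i
      simp [Matrix.algebraMap_eq_diagonal, Matrix.mulVec_diagonal, Pi.algebraMap_apply]
    rw [h2, sub_eq_zero] at h1
    exact h1.symm
  obtain ⟨p, hp, hps⟩ := posdef_complexify P hPsymm hPpos v hv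
  obtain ⟨q, hq, hqs⟩ := posdef_complexify Q hQsymm hQpos v hv
  -- complexify the Lyapunov equation
  have hLyapC : Aℂᵀ * Pℂ + Pℂ * Aℂ = -Qℂ := by
    have h := congrArg (⇑(algebraMap ℝ ℂ).mapMatrix) hLyap
    simp only [map_add, map_neg, RingHom.mapMatrix_apply, Matrix.map_mul,
      Matrix.transpose_map] at h
    exact h
  -- A is real, so Aℂ commutes with entrywise star
  have hstar : Aℂ *ᵥ star v = star (Aℂ *ᵥ v) := by
    funext i
    simp [mulVec, dotProduct, Pi.star_apply, hAC, Matrix.map_apply, map_sum]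
  have hterm1 : star v ⬝ᵥ (Aℂᵀ * Pℂ) *ᵥ v = (starRingEnd ℂ) μ * (p : ℂ) := by
    rw [← Matrix.mulVec_mulVec, Matrix.dotProduct_mulVec, Matrix.vecMul_transpose,
      hstar, heig, star_smul, smul_dotProduct, hps]
    rfl
  have hterm2 : star v ⬝ᵥ (Pℂ * Aℂ) *ᵥ v = μ * (p : ℂ) := by
    rw [← Matrix.mulVec_mulVec, heig, Matrix.mulVec_smul, dotProduct_smul, hps]
    rfl
  have hmain : ((starRingEnd ℂ) μ + μ) * (p : ℂ) = -(q : ℂ) := by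
    have := congrArg (fun M : Matrix (Fin n) (Fin n) ℂ => star v ⬝ᵥ M *ᵥ v) hLyapC
    simp only [Matrix.add_mulVec, dotProduct_add, Matrix.neg_mulVec,
      dotProduct_neg, hterm1, hterm2, hqs] at this
    rw [add_mul, ← hqs]
    exact this
  have hconj : (starRingEnd ℂ) μ + μ = ((2 * μ.re : ℝ) : ℂ) := by
    apply Complex.ext <;> simp [Complex.conj_re, Complex.conj_im] <;> ring
  rw [hconj, ← Complex.ofReal_mul, ← Complex.ofReal_neg] at hmain
  have hreal : 2 * μ.re * p = -q := Complex.ofReal_inj.mp hmain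
  nlinarith
end

section
/- Let A be an n×n real matrix and suppose there exist real symmetric positive definite matrices P and Q with Aᵀ P + P A = -Q. Then the equilibrium point 0 of the linear system ẋ = A x is asymptotically stable: every differentiable solution x : ℝ → ℝⁿ of x'(t) = A x(t) satisfies x(t) → 0 as t → ∞. -/
open Matrix Filter

private lemma quad_deriv {n : ℕ} (M : Matrix (Fin n) (Fin n) ℝ) (x : ℝ → Fin n → ℝ)
    (x' : Fin n → ℝ) (t : ℝ) (h : HasDerivAt x x' t) :
    HasDerivAt (fun s => x s ⬝ᵥ M.mulVec (x s))
      (x' ⬝ᵥ M.mulVec (x t) + x t ⬝ᵥ M.mulVec x') t := by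
  have hcoord : ∀ i, HasDerivAt (fun s => x s i) (x' i) t := hasDerivAt_pi.1 h
  have key : HasDerivAt (fun s => ∑ i, x s i * ∑ j, M i j * x s j)
      (∑ i, (x' i * ∑ j, M i j * x t j + x t i * ∑ j, M i j * x' j)) t := by
    apply HasDerivAt.fun_sum
    intro i _
    exact (hcoord i).mul (HasDerivAt.fun_sum fun j _ => (hcoord j).const_mul (M i j))
  have hfun : (fun s => x s ⬝ᵥ M.mulVec (x s))
      = fun s => ∑ i, x s i * ∑ j, M i j * x s j := by
    funext s; simp [dotProduct, mulVec]
  rw [hfun]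
  convert key using 1
  simp [dotProduct, mulVec, Finset.sum_add_distrib]

private lemma quad_shift {n : ℕ} (A P : Matrix (Fin n) (Fin n) ℝ) (y : Fin n → ℝ) :
    A.mulVec y ⬝ᵥ P.mulVec y + y ⬝ᵥ P.mulVec (A.mulVec y)
      = y ⬝ᵥ ((Aᵀ * P + P * A).mulVec y) := by
  rw [add_mulVec, dotProduct_add, ← mulVec_mulVec, ← mulVec_mulVec,
    dotProduct_mulVec y Aᵀ, vecMul_transpose]

private lemma quad_bounds {n : ℕ} (hn : 0 < n) (M : Matrix (Fin n) (Fin n) ℝ)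
    (hpos : ∀ y : Fin n → ℝ, y ≠ 0 → 0 < y ⬝ᵥ M.mulVec y) :
    ∃ a b : ℝ, 0 < a ∧ 0 < b ∧ ∀ y : Fin n → ℝ,
      a * ‖y‖ ^ 2 ≤ y ⬝ᵥ M.mulVec y ∧ y ⬝ᵥ M.mulVec y ≤ b * ‖y‖ ^ 2 := by
  haveI : Nonempty (Fin n) := ⟨⟨0, hn⟩⟩
  set S := Metric.sphere (0 : Fin n → ℝ) 1 with hSdef
  have hS : IsCompact S := isCompact_sphere _ _
  have hSne : S.Nonempty := NormedSpace.sphere_nonempty.2 zero_le_one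
  have hcont : Continuous fun y : Fin n → ℝ => y ⬝ᵥ M.mulVec y :=
    continuous_id.dotProduct (continuous_const.matrix_mulVec continuous_id)
  obtain ⟨u, huS, hu⟩ := hS.exists_isMinOn hSne hcont.continuousOn
  obtain ⟨v, hvS, hv⟩ := hS.exists_isMaxOn hSne hcont.continuousOn
  have huz : u ≠ 0 := by
    intro h0
    have := mem_sphere_zero_iff_norm.1 huS
    rw [h0] at this; simp at this
  have hvz : v ≠ 0 := by
    intro h0
    have := mem_sphere_zero_iff_norm.1 hvS
    rw [h0] at this; simp at this
  refine ⟨_, _, hpos u huz, hpos v hvz, ?_⟩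
  intro y
  rcases eq_or_ne y 0 with rfl | hy
  · simp
  · set r := ‖y‖ with hr
    have hrpos : 0 < r := norm_pos_iff.2 hy
    set w : Fin n → ℝ := r⁻¹ • y with hw
    have hwS : w ∈ S := by
      rw [hSdef, mem_sphere_zero_iff_norm, hw, norm_smul, Real.norm_eq_abs, abs_inv,
        abs_of_pos hrpos, ← hr]
      field_simp
    have hyw : y = r • w := by
      rw [hw, smul_smul]
      field_simp
      rw [one_smul]
    have hquad : y ⬝ᵥ M.mulVec y = r ^ 2 * (w ⬝ᵥ M.mulVec w) := by
      rw [hyw, smul_dotProduct, mulVec_smul, dotProduct_smul]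
      simp [smul_eq_mul]; ring
    have h1 : u ⬝ᵥ M.mulVec u ≤ w ⬝ᵥ M.mulVec w := hu hwS
    have h2 : w ⬝ᵥ M.mulVec w ≤ v ⬝ᵥ M.mulVec v := hv hwS
    constructor
    · rw [hquad]; nlinarith [sq_nonneg r]
    · rw [hquad]; nlinarith [sq_nonneg r]

/-- Let `A` be an `n × n` real matrix and suppose there exist real symmetric
positive definite matrices `P` and `Q` with `Aᵀ P + P A = -Q`.  Then the
equilibrium point `0` of the linear system `ẋ = A x` is asymptotically
stable: every differentiable solution `x` of `x' t = A (x t)` satisfies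
`x t → 0` as `t → ∞`. -/
theorem lyapunov_implies_asymptotic_stability
    {n : ℕ} (A P Q : Matrix (Fin n) (Fin n) ℝ)
    (hPsymm : P.IsSymm) (hPpos : ∀ x : Fin n → ℝ, x ≠ 0 → 0 < x ⬝ᵥ P.mulVec x)
    (hQsymm : Q.IsSymm) (hQpos : ∀ x : Fin n → ℝ, x ≠ 0 → 0 < x ⬝ᵥ Q.mulVec x)
    (hLyap : Aᵀ * P + P * A = -Q)
    (x : ℝ → Fin n → ℝ) (hx : ∀ t, HasDerivAt x (A.mulVec (x t)) t) :
    Tendsto x atTop (nhds 0) := by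
  rcases Nat.eq_zero_or_pos n with hn | hn
  · subst hn
    exact tendsto_const_nhds.congr fun t => (Subsingleton.elim (0 : Fin 0 → ℝ) (x t))
  obtain ⟨aP, bP, haP, hbP, hPbd⟩ := quad_bounds hn P hPpos
  obtain ⟨aQ, bQ, haQ, hbQ, hQbd⟩ := quad_bounds hn Q hQpos
  set c : ℝ := aQ / bP with hc
  have hcpos : 0 < c := div_pos haQ hbP
  set V : ℝ → ℝ := fun t => x t ⬝ᵥ P.mulVec (x t) with hV
  have hVderiv : ∀ t, HasDerivAt V (-(x t ⬝ᵥ Q.mulVec (x t))) t := by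
    intro t
    have h1 := quad_deriv P x (A.mulVec (x t)) t (hx t)
    have h2 : A.mulVec (x t) ⬝ᵥ P.mulVec (x t) + x t ⬝ᵥ P.mulVec (A.mulVec (x t))
        = -(x t ⬝ᵥ Q.mulVec (x t)) := by
      rw [quad_shift, hLyap, neg_mulVec, dotProduct_neg]
    rwa [h2] at h1
  have hVnonneg : ∀ t, 0 ≤ V t := by
    intro t
    rcases eq_or_ne (x t) 0 with h0 | h0
    · simp [hV, h0]
    · exact le_of_lt (hPpos _ h0)
  set W : ℝ → ℝ := fun t => V t * Real.exp (c * t) with hW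
  have hWderiv : ∀ t, HasDerivAt W
      (-(x t ⬝ᵥ Q.mulVec (x t)) * Real.exp (c * t) + V t * (Real.exp (c * t) * c)) t := by
    intro t
    have hexp : HasDerivAt (fun s : ℝ => Real.exp (c * s)) (Real.exp (c * t) * c) t := by
      simpa using ((hasDerivAt_id t).const_mul c).exp
    exact (hVderiv t).mul hexp
  have hW' : ∀ t, deriv W t ≤ 0 := by
    intro t
    rw [(hWderiv t).deriv]
    have hcV : c * V t ≤ x t ⬝ᵥ Q.mulVec (x t) := by
      have h1 : V t ≤ bP * ‖x t‖ ^ 2 := (hPbd (x t)).2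
      have h2 : aQ * ‖x t‖ ^ 2 ≤ x t ⬝ᵥ Q.mulVec (x t) := (hQbd (x t)).1
      have hcb : c * bP = aQ := by rw [hc]; field_simp
      nlinarith
    have he : 0 < Real.exp (c * t) := Real.exp_pos _
    nlinarith
  have hWanti : Antitone W :=
    antitone_of_deriv_nonpos (fun t => (hWderiv t).differentiableAt) hW'
  have hVbound : ∀ t : ℝ, 0 ≤ t → V t ≤ V 0 * Real.exp (-(c * t)) := by
    intro t ht
    have h1 : W t ≤ W 0 := hWanti ht
    have h2 : W 0 = V 0 := by simp [hW]
    rw [h2] at h1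
    have he : 0 < Real.exp (c * t) := Real.exp_pos _
    rw [Real.exp_neg, ← div_eq_mul_inv, le_div_iff₀ he]
    exact h1
  have hsq : Tendsto (fun t => ‖x t‖ ^ 2) atTop (nhds 0) := by
    have hg : Tendsto (fun t : ℝ => (V 0 / aP) * Real.exp (-(c * t))) atTop (nhds 0) := by
      have h1 : Tendsto (fun t : ℝ => c * t) atTop atTop :=
        Tendsto.const_mul_atTop hcpos tendsto_id
      have h2 : Tendsto (fun t : ℝ => -(c * t)) atTop atBot := tendsto_neg_atBot_iff.2 h1
      have h3 : Tendsto (fun t : ℝ => Real.exp (-(c * t))) atTop (nhds 0) :=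
        Real.tendsto_exp_atBot.comp h2
      simpa using h3.const_mul (V 0 / aP)
    apply squeeze_zero' (g := fun t => (V 0 / aP) * Real.exp (-(c * t)))
    · exact Eventually.of_forall fun t => sq_nonneg _
    · filter_upwards [eventually_ge_atTop (0 : ℝ)] with t ht
      have h1 : aP * ‖x t‖ ^ 2 ≤ V t := (hPbd (x t)).1
      have h2 := hVbound t ht
      rw [div_mul_eq_mul_div, le_div_iff₀ haP]
      nlinarith
    · exact hg
  have hnorm : Tendsto (fun t => ‖x t‖) atTop (nhds 0) := by
    have := hsq.sqrt
    simp only [Real.sqrt_zero] at this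
    refine this.congr fun t => ?_
    rw [Real.sqrt_sq (norm_nonneg _)]
  exact tendsto_zero_iff_norm_tendsto_zero.2 hnorm
end
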